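/- Consider the palette gadget P: take binom(i,2)·j+1 disjoint copies of T(i-2,j) together with three additional vertices u1, u2, u3, each adjacent to every vertex of the copies but not to each other. Then in any (i,j)-coloring of P (with i ≥ 3), at least two of the vertices u1, u2, u3 receive the same color. -/

import Mathlib

/-- Vertex type of the graph `T(n+1, j)` of the paper. -/
def TV : ℕ → ℕ → Type
  | 0, _ => Unit
  | n + 1, j => Option (Fin (j + 1) × TV n j)

/-- The graph `T(n+1, j)`: `Tgraph 0 j = K₁`; `Tgraph (n+1) j` is `j+1` disjoint copies of
`Tgraph n j` together with a universal vertex. -/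
def Tgraph : (n : ℕ) → (j : ℕ) → SimpleGraph (TV n j)
  | 0, _ => ⊥
  | n + 1, j => SimpleGraph.fromRel (fun a b =>
      match a, b with
      | none, _ => True
      | some _, none => False
      | some p, some q => p.1 = q.1 ∧ (Tgraph n j).Adj p.2 q.2)

/-- Vertex type of the palette gadget `P(u₁, u₂, u₃, i, j)` with `i = m + 3`:
three endpoint vertices plus `C(i,2)·j + 1` disjoint copies of `T(i-2, j) = Tgraph m j`. -/
def PV (m j : ℕ) : Type := (Fin 3) ⊕ (Fin ((m + 3).choose 2 * j + 1) × TV m j)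

/-- The palette gadget `P(u₁, u₂, u₃, i, j)` with `i = m + 3`: `C(i,2)·j + 1` disjoint copies
of `T(i-2, j)`, together with three vertices `u₁, u₂, u₃` adjacent to every vertex of the
copies but not to each other. -/
def Pgraph (m j : ℕ) : SimpleGraph (PV m j) :=
  SimpleGraph.fromRel (fun a b =>
    match a, b with
    | Sum.inl _, Sum.inr _ => True
    | Sum.inr p, Sum.inr q => p.1 = q.1 ∧ (Tgraph m j).Adj p.2 q.2
    | _, _ => False)

instance instDecEqTV : ∀ (m j : ℕ), DecidableEq (TV m j)
  | 0, _ => inferInstanceAs (DecidableEq Unit)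
  | m + 1, j => by
      haveI := instDecEqTV m j
      exact inferInstanceAs (DecidableEq (Option (Fin (j + 1) × TV m j)))

instance instFintypeTV : ∀ (m j : ℕ), Fintype (TV m j)
  | 0, _ => inferInstanceAs (Fintype Unit)
  | m + 1, j => by
      haveI := instFintypeTV m j
      exact inferInstanceAs (Fintype (Option (Fin (j + 1) × TV m j)))

instance (m j : ℕ) : DecidableEq (PV m j) :=
  inferInstanceAs (DecidableEq ((Fin 3) ⊕ (Fin ((m + 3).choose 2 * j + 1) × TV m j)))

instance (m j : ℕ) : Fintype (PV m j) :=
  inferInstanceAs (Fintype ((Fin 3) ⊕ (Fin ((m + 3).choose 2 * j + 1) × TV m j)))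

lemma Tgraph_adj_none_some (m j : ℕ) (p : Fin (j + 1) × TV m j) :
    (Tgraph (m + 1) j).Adj none (some p) := by
  show (SimpleGraph.fromRel _).Adj none (some p)
  refine (SimpleGraph.fromRel_adj ..).mpr ?_
  exact ⟨by simp, Or.inl trivial⟩

lemma Tgraph_adj_some_some (m j : ℕ) (k : Fin (j + 1)) {v u : TV m j}
    (h : (Tgraph m j).Adj v u) :
    (Tgraph (m + 1) j).Adj (some (k, v)) (some (k, u)) := by
  show (SimpleGraph.fromRel _).Adj _ _
  refine (SimpleGraph.fromRel_adj ..).mpr ?_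
  exact ⟨fun he => h.ne (congrArg Prod.snd (Option.some.inj he)), Or.inl ⟨rfl, h⟩⟩

/-- Key lemma: any `j`-bounded coloring of `Tgraph m j` uses at least `m+1` colors. -/
lemma Tgraph_colors : ∀ (m j : ℕ) {C : Type} [DecidableEq C] (g : TV m j → C),
    (∀ v, {u | (Tgraph m j).Adj v u ∧ g u = g v}.ncard ≤ j) →
    m + 1 ≤ (Finset.univ.image g).card := by
  intro m
  induction m with
  | zero =>
      intro j C _ g _
      have h : (Finset.univ.image g).Nonempty :=
        Finset.Nonempty.image ⟨(() : Unit), Finset.mem_univ _⟩ g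
      simpa using Finset.card_pos.mpr h
  | succ m ih =>
      intro j C _ g hg
      -- some copy avoids the color of the universal vertex
      have hex : ∃ k : Fin (j + 1), ∀ v : TV m j, g (some (k, v)) ≠ g none := by
        by_contra h
        push_neg at h
        choose v hv using h
        have hinj : Function.Injective
            (fun k : Fin (j + 1) => (some (k, v k) : TV (m + 1) j)) := by
          intro a b hab
          simpa using congrArg (fun o => (Option.map Prod.fst o).getD a) hab
        have hsub : Set.range (fun k : Fin (j + 1) => (some (k, v k) : TV (m + 1) j)) ⊆
            {u | (Tgraph (m + 1) j).Adj none u ∧ g u = g none} := by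
          rintro _ ⟨k, rfl⟩
          exact ⟨Tgraph_adj_none_some m j _, hv k⟩
        have h1 : (Set.range (fun k : Fin (j + 1) =>
            (some (k, v k) : TV (m + 1) j))).ncard = j + 1 := by
          rw [← Set.image_univ, Set.ncard_image_of_injective _ hinj, Set.ncard_univ]
          simp
        have h2 := Set.ncard_le_ncard hsub (Set.toFinite _)
        have h4 : j + 1 ≤ j := le_trans (le_trans h1.ge h2) (hg none)
        omega
      obtain ⟨k, hk⟩ := hex
      set g' : TV m j → C := fun v => g (some (k, v)) with hg'def
      have hg' : ∀ v, {u | (Tgraph m j).Adj v u ∧ g' u = g' v}.ncard ≤ j := by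
        intro v
        have hinj : Function.Injective (fun u : TV m j => (some (k, u) : TV (m + 1) j)) := by
          intro a b h; simpa using h
        have hsub : (fun u : TV m j => (some (k, u) : TV (m + 1) j)) ''
            {u | (Tgraph m j).Adj v u ∧ g' u = g' v} ⊆
            {u | (Tgraph (m + 1) j).Adj (some (k, v)) u ∧ g u = g (some (k, v))} := by
          rintro _ ⟨u, ⟨hadj, hcol⟩, rfl⟩
          exact ⟨Tgraph_adj_some_some m j k hadj, hcol⟩
        calc {u | (Tgraph m j).Adj v u ∧ g' u = g' v}.ncard
            = ((fun u : TV m j => (some (k, u) : TV (m + 1) j)) ''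
                {u | (Tgraph m j).Adj v u ∧ g' u = g' v}).ncard :=
              (Set.ncard_image_of_injective _ hinj).symm
          _ ≤ _ := Set.ncard_le_ncard hsub (Set.toFinite _)
          _ ≤ j := hg (some (k, v))
      have hih := ih j g' hg'
      have hnotmem : g none ∉ Finset.univ.image g' := by
        simp only [Finset.mem_image, Finset.mem_univ, true_and]
        rintro ⟨v, hv⟩
        exact hk v hv
      have hsubim : insert (g none) (Finset.univ.image g') ⊆ Finset.univ.image g := by
        intro c hc
        rcases Finset.mem_insert.mp hc with h | h
        · exact h ▸ Finset.mem_image_of_mem g (Finset.mem_univ none)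
        · obtain ⟨v, -, rfl⟩ := Finset.mem_image.mp h
          exact Finset.mem_image_of_mem g (Finset.mem_univ (some (k, v)))
      calc m + 1 + 1 ≤ (Finset.univ.image g').card + 1 := by omega
        _ = (insert (g none) (Finset.univ.image g')).card :=
            (Finset.card_insert_of_notMem hnotmem).symm
        _ ≤ (Finset.univ.image g).card := Finset.card_le_card hsubim

/-- In any `(i, j)`-coloring of the palette gadget (here `i = m + 3 ≥ 3`), at least two of
the three endpoints `u₁, u₂, u₃` receive the same color. -/
theorem paletteGadget_forces_share (m j : ℕ) (f : PV m j → Fin (m + 3))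
    (hf : ∀ v : PV m j, {u | (Pgraph m j).Adj v u ∧ f u = f v}.ncard ≤ j) :
    f (Sum.inl 0) = f (Sum.inl 1) ∨ f (Sum.inl 0) = f (Sum.inl 2) ∨
      f (Sum.inl 1) = f (Sum.inl 2) := by
  set N := (m + 3).choose 2 * j + 1 with hN
  -- colorings of each copy
  set g : Fin N → TV m j → Fin (m + 3) := fun k v => f (Sum.inr (k, v)) with hg
  have hgbound : ∀ k v, {u | (Tgraph m j).Adj v u ∧ g k u = g k v}.ncard ≤ j := by
    intro k v
    have hinj : Function.Injective (fun u : TV m j => (Sum.inr (k, u) : PV m j)) := by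
      intro a b h; simpa using h
    have hsub : (fun u : TV m j => (Sum.inr (k, u) : PV m j)) ''
        {u | (Tgraph m j).Adj v u ∧ g k u = g k v} ⊆
        {u | (Pgraph m j).Adj (Sum.inr (k, v)) u ∧ f u = f (Sum.inr (k, v))} := by
      rintro _ ⟨u, ⟨hadj, hcol⟩, rfl⟩
      refine ⟨?_, hcol⟩
      show (SimpleGraph.fromRel _).Adj _ _
      refine (SimpleGraph.fromRel_adj ..).mpr ?_
      exact ⟨fun he => hadj.ne (congrArg Prod.snd (Sum.inr.inj he)), Or.inl ⟨rfl, hadj⟩⟩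
    calc {u | (Tgraph m j).Adj v u ∧ g k u = g k v}.ncard
        = ((fun u : TV m j => (Sum.inr (k, u) : PV m j)) ''
            {u | (Tgraph m j).Adj v u ∧ g k u = g k v}).ncard :=
          (Set.ncard_image_of_injective _ hinj).symm
      _ ≤ _ := Set.ncard_le_ncard hsub (Set.toFinite _)
      _ ≤ j := hf (Sum.inr (k, v))
  have hcard : ∀ k : Fin N, m + 1 ≤ (Finset.univ.image (g k)).card :=
    fun k => Tgraph_colors m j (g k) (hgbound k)
  -- pick an (m+1)-subset of the colors used in each copy
  have hS : ∀ k : Fin N, ∃ t ⊆ Finset.univ.image (g k), t.card = m + 1 :=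
    fun k => Finset.exists_subset_card_eq (hcard k)
  choose S hS1 hS2 using hS
  -- pigeonhole: some (m+1)-subset is chosen for at least j+1 copies
  have maps : ∀ k ∈ (Finset.univ : Finset (Fin N)),
      S k ∈ (Finset.univ : Finset (Fin (m + 3))).powersetCard (m + 1) := by
    intro k _
    exact Finset.mem_powersetCard_univ.mpr (hS2 k)
  have hlt : ((Finset.univ : Finset (Fin (m + 3))).powersetCard (m + 1)).card * j <
      (Finset.univ : Finset (Fin N)).card := by
    rw [Finset.card_powersetCard, Finset.card_univ, Finset.card_univ,
      Fintype.card_fin, Fintype.card_fin]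
    have h : (m + 3).choose (m + 1) = (m + 3).choose 2 := by
      have := Nat.choose_symm (show 2 ≤ m + 3 by omega)
      simpa [show m + 3 - 2 = m + 1 by omega] using this
    rw [h]
    omega
  obtain ⟨T, hTmem, hTfib⟩ :=
    Finset.exists_lt_card_fiber_of_mul_lt_card_of_maps_to maps hlt
  have hTcard : T.card = m + 1 := Finset.mem_powersetCard_univ.mp hTmem
  set F := Finset.univ.filter (fun k : Fin N => S k = T) with hF
  -- the colors of the three endpoints are not in T
  have hnot : ∀ a : Fin 3, f (Sum.inl a) ∉ T := by
    intro a hc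
    have hv : ∀ k : Fin N, k ∈ F → ∃ v : TV m j, g k v = f (Sum.inl a) := by
      intro k hk
      have hkT : S k = T := (Finset.mem_filter.mp hk).2
      have : f (Sum.inl a) ∈ Finset.univ.image (g k) := hS1 k (hkT ▸ hc)
      obtain ⟨v, -, hv⟩ := Finset.mem_image.mp this
      exact ⟨v, hv⟩
    choose v hvcol using hv
    have hinj : Function.Injective
        (fun k : {x // x ∈ F} => (Sum.inr (k.1, v k.1 k.2) : PV m j)) := by
      intro a b h
      have : a.1 = b.1 := by
        have := Sum.inr.inj h
        exact congrArg Prod.fst this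
      exact Subtype.ext this
    have hsub : Set.range
        (fun k : {x // x ∈ F} => (Sum.inr (k.1, v k.1 k.2) : PV m j)) ⊆
        {u | (Pgraph m j).Adj (Sum.inl a) u ∧ f u = f (Sum.inl a)} := by
      rintro _ ⟨k, rfl⟩
      refine ⟨?_, hvcol k.1 k.2⟩
      show (SimpleGraph.fromRel _).Adj _ _
      refine (SimpleGraph.fromRel_adj ..).mpr ?_
      exact ⟨Sum.inl_ne_inr, Or.inl trivial⟩
    have h1 : (Set.range
        (fun k : {x // x ∈ F} => (Sum.inr (k.1, v k.1 k.2) : PV m j))).ncard = F.card := by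
      rw [← Set.image_univ, Set.ncard_image_of_injective _ hinj, Set.ncard_univ,
        Nat.card_eq_fintype_card, Fintype.card_coe]
    have h2 := Set.ncard_le_ncard hsub (Set.toFinite _)
    have h4 : F.card ≤ j := le_trans (le_trans h1.ge h2) (hf (Sum.inl a))
    omega
  -- three colors in the 2-element complement of T
  by_contra hcon
  push_neg at hcon
  obtain ⟨h01, h02, h12⟩ := hcon
  have hsub3 : ({f (Sum.inl 0), f (Sum.inl 1), f (Sum.inl 2)} :
      Finset (Fin (m + 3))) ⊆ Tᶜ := by
    intro c hc
    rw [Finset.mem_compl]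
    simp only [Finset.mem_insert, Finset.mem_singleton] at hc
    rcases hc with rfl | rfl | rfl
    · exact hnot 0
    · exact hnot 1
    · exact hnot 2
  have h3card : ({f (Sum.inl 0), f (Sum.inl 1), f (Sum.inl 2)} :
      Finset (Fin (m + 3))).card = 3 := by
    rw [Finset.card_insert_of_notMem (by simp [h01, h02]),
      Finset.card_insert_of_notMem (by simp [h12]), Finset.card_singleton]
  have hcompl : (Tᶜ : Finset (Fin (m + 3))).card = 2 := by
    rw [Finset.card_compl, hTcard, Fintype.card_fin]
    omega
  have := Finset.card_le_card hsub3
  omega
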